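/- Fix a dictionary D ∈ ℝ^{d×n} of full row rank, a matrix A ∈ ℝ^{m×d} satisfying the D-null space property of order s, and an index set T with |T| ≤ s. Define h(w) = sup_{ũ ∈ ker D} ( ‖w_{T^c}‖₁ − ‖w_T + ũ‖₁ ) / ‖D w‖₂. Let C₁ > 0 be a constant such that the set W = { w ∈ ℝ^n : D w ∈ ker A \ {0} and ‖w‖₂ ≤ C₁‖D w‖₂ } is nonempty. Then there exists a constant C₂ > 0 such that h(w) ≥ C₂ for all w ∈ W. -/

import Mathlib

open scoped BigOperators

section Defs

variable {𝕜 : Type*}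

/-- ℓ¹ norm of a finitely-indexed vector. -/
noncomputable def norm1 [RCLike 𝕜] {ι : Type*} [Fintype ι] (x : ι → 𝕜) : ℝ :=
  ∑ i, ‖x i‖

/-- ℓ² norm of a finitely-indexed vector. -/
noncomputable def norm2 [RCLike 𝕜] {ι : Type*} [Fintype ι] (x : ι → 𝕜) : ℝ :=
  Real.sqrt (∑ i, ‖x i‖ ^ 2)

/-- Restriction of a vector to an index set `T` (zero outside `T`). -/
def restr [Zero 𝕜] {ι : Type*} [DecidableEq ι] (T : Finset ι) (x : ι → 𝕜) : ι → 𝕜 :=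
  fun i => if i ∈ T then x i else 0

/-- `x` has at most `s` nonzero entries. -/
def sparse [Zero 𝕜] {ι : Type*} (s : ℕ) (x : ι → 𝕜) : Prop :=
  {i | x i ≠ 0}.ncard ≤ s

/-- Null space property of order `s`. -/
def NSP [RCLike 𝕜] {m : ℕ} {ι : Type*} [Fintype ι] [DecidableEq ι]
    (M : Matrix (Fin m) ι 𝕜) (s : ℕ) : Prop :=
  ∀ v : ι → 𝕜, M.mulVec v = 0 → v ≠ 0 →
    ∀ T : Finset ι, T.card ≤ s → norm1 (restr T v) < norm1 (restr Tᶜ v)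

/-- `D`-null space property of order `s`. -/
def DNSP [RCLike 𝕜] {m d : ℕ} {ι : Type*} [Fintype ι] [DecidableEq ι]
    (A : Matrix (Fin m) (Fin d) 𝕜) (D : Matrix (Fin d) ι 𝕜) (s : ℕ) : Prop :=
  ∀ T : Finset ι, T.card ≤ s →
    ∀ v : ι → 𝕜, A.mulVec (D.mulVec v) = 0 → D.mulVec v ≠ 0 →
      ∃ u : ι → 𝕜, D.mulVec u = 0 ∧ norm1 (restr T v + u) < norm1 (restr Tᶜ v)

/-- Strong `D`-null space property of order `s` with constant `c`. -/
def SNSPc [RCLike 𝕜] {m d : ℕ} {ι : Type*} [Fintype ι] [DecidableEq ι]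
    (A : Matrix (Fin m) (Fin d) 𝕜) (D : Matrix (Fin d) ι 𝕜) (s : ℕ) (c : ℝ) : Prop :=
  ∀ v : ι → 𝕜, A.mulVec (D.mulVec v) = 0 →
    ∀ T : Finset ι, T.card ≤ s →
      ∃ u : ι → 𝕜, D.mulVec u = 0 ∧
        c * norm2 (D.mulVec v) ≤ norm1 (restr Tᶜ v) - norm1 (restr T v + u)

/-- Smallest positive singular value of a matrix: the infimum of the set of positive `σ`
such that `σ²` is an eigenvalue of `Mᴴ M`. -/
noncomputable def nuSV [RCLike 𝕜] {κ ι : Type*} [Fintype κ] [Fintype ι]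
    (M : Matrix κ ι 𝕜) : ℝ :=
  sInf {σ : ℝ | 0 < σ ∧ ∃ v : ι → 𝕜, v ≠ 0 ∧ (M.conjTranspose * M).mulVec v = ((σ : 𝕜) ^ 2) • v}

/-- ℓ¹ error of the best `s`-term approximation. -/
noncomputable def sigmaS [RCLike 𝕜] {ι : Type*} [Fintype ι] (s : ℕ) (x : ι → 𝕜) : ℝ :=
  sInf {r : ℝ | ∃ v : ι → 𝕜, sparse s v ∧ r = norm1 (x - v)}

/-- Spectral norm (ℓ² → ℓ² operator norm). -/
noncomputable def specNorm [RCLike 𝕜] {m d : ℕ} (A : Matrix (Fin m) (Fin d) 𝕜) : ℝ :=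
  sSup {r : ℝ | ∃ x : Fin d → 𝕜, norm2 x ≤ 1 ∧ r = norm2 (A.mulVec x)}

/-- ℓ¹ → ℓ² operator norm: the maximal ℓ² norm of a column. -/
noncomputable def norm12 [RCLike 𝕜] {d : ℕ} {ι : Type*} [Fintype ι]
    (M : Matrix (Fin d) ι 𝕜) : ℝ :=
  sSup {r : ℝ | ∃ j : ι, r = norm2 (fun i => M i j)}

end Defs

section Aux
variable {ι : Type*} [Fintype ι]

lemma norm2_nonneg (x : ι → ℝ) : 0 ≤ norm2 x := Real.sqrt_nonneg _

lemma norm1_nonneg (x : ι → ℝ) : 0 ≤ norm1 x :=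
  Finset.sum_nonneg fun i _ => norm_nonneg _

lemma norm2_eq_zero {x : ι → ℝ} : norm2 x = 0 ↔ x = 0 := by
  unfold norm2
  rw [Real.sqrt_eq_zero (by positivity)]
  constructor
  · intro h; funext i
    have := (Finset.sum_eq_zero_iff_of_nonneg (fun i _ => by positivity)).1 h i (Finset.mem_univ i)
    simpa [pow_eq_zero_iff] using this
  · intro h; simp [h]

lemma norm2_pos {x : ι → ℝ} (hx : x ≠ 0) : 0 < norm2 x :=
  lt_of_le_of_ne (norm2_nonneg x) (fun h => hx (norm2_eq_zero.mp h.symm))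

lemma norm2_smul (c : ℝ) (x : ι → ℝ) : norm2 (c • x) = |c| * norm2 x := by
  unfold norm2
  have h : ∑ i, ‖(c • x) i‖ ^ 2 = c ^ 2 * ∑ i, ‖x i‖ ^ 2 := by
    rw [Finset.mul_sum]
    refine Finset.sum_congr rfl fun i _ => ?_
    simp [Pi.smul_apply, norm_smul, mul_pow, Real.norm_eq_abs, sq_abs]
  rw [h, Real.sqrt_mul (sq_nonneg c), Real.sqrt_sq_eq_abs]

lemma norm1_smul (c : ℝ) (x : ι → ℝ) : norm1 (c • x) = |c| * norm1 x := by
  unfold norm1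
  rw [Finset.mul_sum]
  refine Finset.sum_congr rfl fun i _ => ?_
  simp [norm_smul, Real.norm_eq_abs]

variable [DecidableEq ι]

omit [Fintype ι] in
lemma restr_smul (T : Finset ι) (c : ℝ) (x : ι → ℝ) :
    restr T (c • x) = c • restr T x := by
  funext i; unfold restr; by_cases h : i ∈ T <;> simp [h]

omit [DecidableEq ι] in
lemma continuous_norm1 : Continuous fun x : ι → ℝ => norm1 x := by
  unfold norm1
  exact continuous_finset_sum _ fun i _ => ((continuous_apply i).norm)

omit [DecidableEq ι] in
lemma continuous_norm2 : Continuous fun x : ι → ℝ => norm2 x := by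
  unfold norm2
  exact Real.continuous_sqrt.comp
    (continuous_finset_sum _ fun i _ => ((continuous_apply i).norm.pow 2))

omit [Fintype ι] in
lemma continuous_restr (T : Finset ι) : Continuous fun x : ι → ℝ => restr T x := by
  refine continuous_pi fun i => ?_
  unfold restr
  by_cases h : i ∈ T <;> simp only [h, if_true, if_false]
  · exact continuous_apply i
  · exact continuous_const

omit [DecidableEq ι] in
lemma abs_le_norm2 (x : ι → ℝ) (i : ι) : |x i| ≤ norm2 x := by
  unfold norm2
  rw [← Real.sqrt_sq (abs_nonneg (x i))]
  apply Real.sqrt_le_sqrt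
  calc |x i| ^ 2 = ‖x i‖ ^ 2 := by rw [Real.norm_eq_abs]
  _ ≤ ∑ j, ‖x j‖ ^ 2 := Finset.single_le_sum (f := fun j => ‖x j‖ ^ 2)
        (fun j _ => by positivity) (Finset.mem_univ i)

/-- key scaling identity -/
lemma scale_num (T : Finset ι) (t : ℝ) (ht : 0 < t) (w ut : ι → ℝ) :
    norm1 (restr Tᶜ (t • w)) - norm1 (restr T (t • w) + t • ut)
      = t * (norm1 (restr Tᶜ w) - norm1 (restr T w + ut)) := by
  have h1 : restr T (t • w) + t • ut = t • (restr T w + ut) := by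
    rw [restr_smul, smul_add]
  rw [restr_smul, h1, norm1_smul, norm1_smul, abs_of_pos ht]
  ring

end Aux

/-- lsc-on-compact positive function has a positive lower bound. -/
lemma exists_pos_lb {X : Type*} [TopologicalSpace X] {K : Set X} (hK : IsCompact K)
    (f : X → ℝ)
    (hlsc : ∀ x ∈ K, ∀ c < f x, ∀ᶠ y in nhdsWithin x K, c < f y)
    (hpos : ∀ x ∈ K, 0 < f x) :
    ∃ c : ℝ, 0 < c ∧ ∀ x ∈ K, c ≤ f x := by
  rcases K.eq_empty_or_nonempty with h | ⟨x₀, hx₀⟩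
  · exact ⟨1, one_pos, by simp [h]⟩
  have key : ∀ x (hx : x ∈ K), ∃ U : Set X, IsOpen U ∧ x ∈ U ∧
      ∀ y ∈ U ∩ K, f x / 2 < f y := by
    intro x hx
    have := hlsc x hx (f x / 2) (by linarith [hpos x hx])
    rw [Filter.eventually_iff, mem_nhdsWithin] at this
    obtain ⟨U, hUo, hxU, hU⟩ := this
    exact ⟨U, hUo, hxU, fun y hy => hU hy⟩
  choose U hUo hxU hU using key
  obtain ⟨t, ht⟩ := hK.elim_nhds_subcover' U (fun x hx => (hUo x hx).mem_nhds (hxU x hx))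
  have htne : t.Nonempty := by
    by_contra h
    rw [Finset.not_nonempty_iff_eq_empty] at h
    have := ht hx₀
    simp [h] at this
  refine ⟨t.inf' htne (fun x => f x.1 / 2), ?_, ?_⟩
  · rw [Finset.lt_inf'_iff]
    intro x _; linarith [hpos x.1 x.2]
  · intro y hy
    have hmem := ht hy
    simp only [Set.mem_iUnion] at hmem
    obtain ⟨x, hxt, hyU⟩ := hmem
    calc t.inf' htne (fun x => f x.1 / 2) ≤ f x.1 / 2 := Finset.inf'_le _ hxt
    _ ≤ f y := le_of_lt (hU x.1 x.2 y ⟨hyU, hy⟩)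


/-- under `D`-NSP, the function `h` is bounded below by a positive constant
on the set `W`. -/
theorem stmt18 {m d n s : ℕ}
    (A : Matrix (Fin m) (Fin d) ℝ) (D : Matrix (Fin d) (Fin n) ℝ)
    (hD : Function.Surjective D.mulVec)
    (hDNSP : DNSP A D s)
    (T : Finset (Fin n)) (hT : T.card ≤ s)
    (C₁ : ℝ) (hC₁ : 0 < C₁)
    (hW : ∃ w : Fin n → ℝ, A.mulVec (D.mulVec w) = 0 ∧ D.mulVec w ≠ 0 ∧
      norm2 w ≤ C₁ * norm2 (D.mulVec w)) :
    ∃ C₂ : ℝ, 0 < C₂ ∧ ∀ w : Fin n → ℝ,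
      A.mulVec (D.mulVec w) = 0 → D.mulVec w ≠ 0 → norm2 w ≤ C₁ * norm2 (D.mulVec w) →
      C₂ ≤ sSup {r : ℝ | ∃ ut : Fin n → ℝ, D.mulVec ut = 0 ∧
        r = (norm1 (restr Tᶜ w) - norm1 (restr T w + ut)) / norm2 (D.mulVec w)} := by
  -- the value sets
  set S : (Fin n → ℝ) → Set ℝ := fun w => {r : ℝ | ∃ ut : Fin n → ℝ, D.mulVec ut = 0 ∧
    r = (norm1 (restr Tᶜ w) - norm1 (restr T w + ut)) / norm2 (D.mulVec w)} with hS
  set f : (Fin n → ℝ) → ℝ := fun w => sSup (S w) with hf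
  have hSne : ∀ w, (S w).Nonempty := by
    intro w
    exact ⟨_, 0, Matrix.mulVec_zero D, by rw [add_zero]⟩
  have hSbdd : ∀ w, D.mulVec w ≠ 0 → BddAbove (S w) := by
    intro w hw
    refine ⟨norm1 (restr Tᶜ w) / norm2 (D.mulVec w), fun r hr => ?_⟩
    obtain ⟨ut, hut, rfl⟩ := hr
    exact (div_le_div_iff_of_pos_right (norm2_pos hw)).mpr (sub_le_self _ (norm1_nonneg _))
  -- continuity of D ∘ mulVec etc.
  have hcontD : Continuous fun w : Fin n → ℝ => D.mulVec w := by
    have h := (Matrix.mulVecLin D).continuous_of_finiteDimensional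
    exact h
  have hcontAD : Continuous fun w : Fin n → ℝ => A.mulVec (D.mulVec w) := by
    have h := (Matrix.mulVecLin A).continuous_of_finiteDimensional
    exact (h.comp hcontD).congr (fun w => by simp [Matrix.mulVecLin_apply])
  -- the compact set
  set K : Set (Fin n → ℝ) :=
    {w | A.mulVec (D.mulVec w) = 0 ∧ norm2 (D.mulVec w) = 1 ∧ norm2 w ≤ C₁} with hK
  have hKD : ∀ w ∈ K, D.mulVec w ≠ 0 := by
    intro w hw h0
    have := hw.2.1
    rw [h0, norm2_eq_zero.mpr rfl] at this
    · norm_num at this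
  have hKcl : IsClosed K := by
    have : K = (fun w : Fin n → ℝ => A.mulVec (D.mulVec w)) ⁻¹' {0} ∩
        ((fun w : Fin n → ℝ => norm2 (D.mulVec w)) ⁻¹' {1} ∩
          (fun w : Fin n → ℝ => norm2 w) ⁻¹' Set.Iic C₁) := by
      ext w; simp [hK, Set.mem_setOf_eq, and_assoc]
    rw [this]
    exact (isClosed_singleton.preimage hcontAD).inter
      ((isClosed_singleton.preimage (continuous_norm2.comp hcontD)).inter
        (isClosed_Iic.preimage continuous_norm2))
  have hKbd : Bornology.IsBounded K := by
    apply (Metric.isBounded_closedBall (x := (0 : Fin n → ℝ)) (r := C₁)).subset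
    intro w hw
    rw [Metric.mem_closedBall, dist_zero_right]
    rw [pi_norm_le_iff_of_nonneg hC₁.le]
    intro i
    exact le_trans (abs_le_norm2 w i) hw.2.2
  have hKcp : IsCompact K := Metric.isCompact_iff_isClosed_bounded.mpr ⟨hKcl, hKbd⟩
  -- normalization map: w ↦ (norm2 (D w))⁻¹ • w lands in K, preserving S
  have hnorm : ∀ w : Fin n → ℝ, A.mulVec (D.mulVec w) = 0 → D.mulVec w ≠ 0 →
      norm2 w ≤ C₁ * norm2 (D.mulVec w) →
      ((norm2 (D.mulVec w))⁻¹ • w) ∈ K ∧ S ((norm2 (D.mulVec w))⁻¹ • w) = S w := by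
    intro w h1 h2 h3
    set ν := norm2 (D.mulVec w) with hν
    have hνpos : 0 < ν := norm2_pos h2
    have htpos : 0 < ν⁻¹ := inv_pos.mpr hνpos
    have hDw' : D.mulVec (ν⁻¹ • w) = ν⁻¹ • D.mulVec w := D.mulVec_smul ν⁻¹ w
    have hν' : norm2 (D.mulVec (ν⁻¹ • w)) = 1 := by
      rw [hDw', norm2_smul, abs_of_pos htpos, inv_mul_cancel₀ hνpos.ne']
    constructor; constructor
    · rw [hDw', Matrix.mulVec_smul, h1, smul_zero]
    constructor
    · exact hν'
    · rw [norm2_smul, abs_of_pos htpos]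
      calc ν⁻¹ * norm2 w ≤ ν⁻¹ * (C₁ * ν) := by
            exact mul_le_mul_of_nonneg_left h3 htpos.le
      _ = C₁ := by field_simp
    · -- S (ν⁻¹ • w) = S w
      ext r
      simp only [hS, Set.mem_setOf_eq, hν']
      constructor
      · rintro ⟨ut, hut, rfl⟩
        refine ⟨ν • ut, by rw [Matrix.mulVec_smul, hut, smul_zero], ?_⟩
        rw [div_one]
        have hrw : restr T (ν⁻¹ • w) + ut = restr T (ν⁻¹ • w) + ν⁻¹ • (ν • ut) := by
          rw [smul_smul, inv_mul_cancel₀ hνpos.ne', one_smul]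
        rw [hrw, scale_num T ν⁻¹ htpos w (ν • ut), inv_mul_eq_div]
      · rintro ⟨ut, hut, rfl⟩
        refine ⟨ν⁻¹ • ut, by rw [Matrix.mulVec_smul, hut, smul_zero], ?_⟩
        rw [div_one, scale_num T ν⁻¹ htpos w ut, inv_mul_eq_div]
  -- positivity on K
  have hpos : ∀ x ∈ K, 0 < f x := by
    intro w hw
    obtain ⟨u, hu, hlt⟩ := hDNSP T hT w hw.1 (hKD w hw)
    have hmem : (norm1 (restr Tᶜ w) - norm1 (restr T w + u)) / norm2 (D.mulVec w) ∈ S w :=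
      ⟨u, hu, rfl⟩
    have h0 : 0 < (norm1 (restr Tᶜ w) - norm1 (restr T w + u)) / norm2 (D.mulVec w) := by
      rw [hw.2.1]
      simpa using sub_pos.mpr hlt
    exact lt_of_lt_of_le h0 (le_csSup (hSbdd w (hKD w hw)) hmem)
  -- lower semicontinuity on K
  have hlsc : ∀ x ∈ K, ∀ c < f x, ∀ᶠ y in nhdsWithin x K, c < f y := by
    intro x hx c hc
    obtain ⟨r, hrS, hcr⟩ := exists_lt_of_lt_csSup (hSne x) hc
    obtain ⟨ut, hut, rfl⟩ := hrS
    have hca : ContinuousAt (fun y : Fin n → ℝ =>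
        (norm1 (restr Tᶜ y) - norm1 (restr T y + ut)) / norm2 (D.mulVec y)) x := by
      apply ContinuousAt.div
      · exact ((continuous_norm1.comp (continuous_restr Tᶜ)).sub
          (continuous_norm1.comp ((continuous_restr T).add continuous_const))).continuousAt
      · exact (continuous_norm2.comp hcontD).continuousAt
      · exact (norm2_pos (hKD x hx)).ne'
    have hev : ∀ᶠ y in nhds x, c <
        (norm1 (restr Tᶜ y) - norm1 (restr T y + ut)) / norm2 (D.mulVec y) :=
      hca.eventually (eventually_gt_nhds hcr)
    filter_upwards [hev.filter_mono nhdsWithin_le_nhds, self_mem_nhdsWithin] with y hgy hyK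
    exact lt_of_lt_of_le hgy (le_csSup (hSbdd y (hKD y hyK)) ⟨ut, hut, rfl⟩)
  obtain ⟨c, hcpos, hcb⟩ := exists_pos_lb hKcp f hlsc hpos
  refine ⟨c, hcpos, ?_⟩
  intro w h1 h2 h3
  obtain ⟨hwK, hSeq⟩ := hnorm w h1 h2 h3
  have h4 := hcb _ hwK
  simp only [hf] at h4
  rw [hSeq] at h4
  exact h4
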